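/- Let A be a Hermitian positive definite matrix with condition number κ (ratio of largest to smallest eigenvalue), and suppose A ≈_ε B for a Hermitian positive definite B with ε ≤ 1/(56κ³). Then A³ ≈_{56κ³ε} B³. -/

import Mathlib

open Matrix
open scoped ComplexOrder

section Helpers

variable {n : Type*} [Fintype n] [DecidableEq n]

private lemma contOn' (f : ℝ → ℝ) (A : Matrix n n ℂ) : ContinuousOn f (spectrum ℝ A) :=
  Matrix.finite_real_spectrum.continuousOn f

private lemma psd_smul' {X : Matrix n n ℂ} {r : ℝ} (hr : 0 ≤ r) (hX : X.PosSemidef) :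
    (r • X).PosSemidef := by
  have h : r • X = (r : ℂ) • X := by
    ext i j; simp [Complex.real_smul]
  rw [h]
  refine ⟨?_, fun x => ?_⟩
  · have := hX.1
    rw [Matrix.IsHermitian, conjTranspose_smul, this]
    rw [Complex.star_def, Complex.conj_ofReal]
  · exact (hX.smul (Complex.zero_le_real.mpr hr)).2 x

private lemma psd_cfc_iff' {A : Matrix n n ℂ} (hA : A.IsHermitian) (f : ℝ → ℝ) :
    (cfc f A).PosSemidef ↔ ∀ i, 0 ≤ f (hA.eigenvalues i) := by
  rw [hA.cfc_eq]
  unfold Matrix.IsHermitian.cfc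
  have hU : star (hA.eigenvectorUnitary : Matrix n n ℂ) * (hA.eigenvectorUnitary : Matrix n n ℂ) = 1 :=
    Unitary.coe_star_mul_self hA.eigenvectorUnitary
  constructor
  · intro h i
    have h2 := h.conjTranspose_mul_mul_same ((hA.eigenvectorUnitary : Matrix n n ℂ))
    rw [← star_eq_conjTranspose] at h2
    have h3 : star (hA.eigenvectorUnitary : Matrix n n ℂ) *
        ((hA.eigenvectorUnitary : Matrix n n ℂ) * diagonal (RCLike.ofReal ∘ f ∘ hA.eigenvalues)
          * star (hA.eigenvectorUnitary : Matrix n n ℂ)) * (hA.eigenvectorUnitary : Matrix n n ℂ)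
        = diagonal (RCLike.ofReal ∘ f ∘ hA.eigenvalues) := by
      rw [mul_assoc, mul_assoc, hU, mul_one, ← mul_assoc, hU, one_mul]
    rw [Unitary.conjStarAlgAut_apply, h3] at h2
    have := Matrix.posSemidef_diagonal_iff.mp h2 i
    simpa using Complex.zero_le_real.mp this
  · intro h
    have hd : Matrix.PosSemidef
        (diagonal (RCLike.ofReal ∘ f ∘ hA.eigenvalues) : Matrix n n ℂ) := by
      apply Matrix.PosSemidef.diagonal
      intro i
      simpa using Complex.zero_le_real.mpr (h i)
    have := hd.mul_mul_conjTranspose_same ((hA.eigenvectorUnitary : Matrix n n ℂ))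
    rwa [← star_eq_conjTranspose] at this

private lemma cfc_poly' (X : Matrix n n ℂ) (hX : IsSelfAdjoint X) (a b : ℝ) (k j : ℕ) :
    cfc (fun x : ℝ => a * x ^ k + b * x ^ j) X = a • X ^ k + b • X ^ j := by
  rw [cfc_add X _ _ (contOn' _ _) (contOn' _ _)]
  rw [cfc_const_mul _ _ _ (contOn' _ _), cfc_const_mul _ _ _ (contOn' _ _)]
  rw [cfc_pow_id X k hX, cfc_pow_id X j hX]

private lemma psd_poly' {X : Matrix n n ℂ} (hX : X.IsHermitian) (a b : ℝ) (k j : ℕ)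
    (hf : ∀ i, 0 ≤ a * hX.eigenvalues i ^ k + b * hX.eigenvalues i ^ j) :
    (a • X ^ k + b • X ^ j).PosSemidef := by
  have h := (psd_cfc_iff' hX (fun x => a * x ^ k + b * x ^ j)).mpr hf
  rwa [cfc_poly' X hX a b k j] at h

private lemma sq_trick' {X Y : Matrix n n ℂ} (hX : X.IsHermitian) (hY : Y.IsHermitian)
    {s u : ℝ} (hu : 0 ≤ u) (hsu : s * u = 1) :
    (s • (X * X) + u • (Y * Y) - (X * Y + Y * X)).PosSemidef ∧
      (s • (X * X) + u • (Y * Y) + (X * Y + Y * X)).PosSemidef := by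
  have key : ∀ W : Matrix n n ℂ, W.IsHermitian → (u • (W * W)).PosSemidef := by
    intro W hW
    apply psd_smul' hu
    have := Matrix.posSemidef_conjTranspose_mul_self W
    rwa [hW.eq] at this
  have hsmul : ∀ (r : ℝ) (V : Matrix n n ℂ), V.IsHermitian → (r • V).IsHermitian := by
    intro r V hV
    simp [Matrix.IsHermitian, conjTranspose_smul, hV.eq]
  constructor
  · have h := key (s • X - Y) ((hsmul s X hX).sub hY)
    have e : u • ((s • X - Y) * (s • X - Y))
        = s • (X * X) + u • (Y * Y) - (X * Y + Y * X) := by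
      simp only [Matrix.sub_mul, Matrix.mul_sub, smul_mul_assoc, mul_smul_comm,
        smul_sub, smul_smul, smul_add]
      match_scalars <;> first | ring1 | linear_combination s * hsu | linear_combination hsu | linear_combination -hsu
    rwa [e] at h
  · have h := key (s • X + Y) ((hsmul s X hX).add hY)
    have e : u • ((s • X + Y) * (s • X + Y))
        = s • (X * X) + u • (Y * Y) + (X * Y + Y * X) := by
      simp only [Matrix.add_mul, Matrix.mul_add, smul_mul_assoc, mul_smul_comm,
        smul_sub, smul_smul, smul_add]
      match_scalars <;> first | ring1 | linear_combination s * hsu | linear_combination hsu | linear_combination -hsu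
    rwa [e] at h

private lemma conj_sub' (X Y : Matrix n n ℂ) (d : ℝ) :
    X * (d • (1 : Matrix n n ℂ) - Y) * X = d • (X * X) - X * Y * X := by
  simp only [Matrix.mul_sub, Matrix.sub_mul, mul_smul_comm, smul_mul_assoc, Matrix.mul_one]

private lemma conj_add' (X Y : Matrix n n ℂ) (d : ℝ) :
    X * (Y + d • (1 : Matrix n n ℂ)) * X = X * Y * X + d • (X * X) := by
  simp only [Matrix.mul_add, Matrix.add_mul, mul_smul_comm, smul_mul_assoc, Matrix.mul_one]

private lemma key_ineq1' {u ρ eδ : ℝ} (hu0 : 0 < u) (hu : u ≤ 1/56) (hρ0 : 0 ≤ ρ)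
    (hρ : ρ ≤ 7*u) (hδ : 1 + 56*u ≤ eδ) : 1 ≤ eδ * (1 - ρ) := by
  nlinarith [mul_nonneg (sub_nonneg.mpr hδ) (by linarith : (0:ℝ) ≤ 1 - ρ),
    mul_nonneg (sub_nonneg.mpr hρ) (by linarith : (0:ℝ) ≤ 1 + 56*u),
    mul_nonneg (sub_nonneg.mpr hu) hu0.le]

end Helpers

set_option maxHeartbeats 2000000 in
/-- If `A` is Hermitian positive definite with condition number `κ` and
`A ≈_ε B` with `ε ≤ 1/(56 κ³)`, then `A³ ≈_{56 κ³ ε} B³`. -/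
theorem stmt_4 {n : Type*} [Fintype n] [DecidableEq n] [Nonempty n]
    (A B : Matrix n n ℂ) (hA : A.PosDef) (hB : B.PosDef)
    (κ ε : ℝ)
    (hκ : κ = (⨆ i, hA.1.eigenvalues i) / (⨅ i, hA.1.eigenvalues i))
    (hε0 : 0 < ε) (hε : ε ≤ 1 / (56 * κ ^ 3))
    (h1 : (Real.exp ε • B - A).PosSemidef)
    (h2 : (A - Real.exp (-ε) • B).PosSemidef) :
    (Real.exp (56 * κ ^ 3 * ε) • B ^ 3 - A ^ 3).PosSemidef ∧
      (A ^ 3 - Real.exp (-(56 * κ ^ 3 * ε)) • B ^ 3).PosSemidef := by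
  have hsA : IsSelfAdjoint A := hA.1
  have hE : (B - A).IsHermitian := hB.1.sub hA.1
  set m : ℝ := ⨅ i, hA.1.eigenvalues i with hm
  set M : ℝ := ⨆ i, hA.1.eigenvalues i with hM
  have heigpos : ∀ i, 0 < hA.1.eigenvalues i := fun i => hA.eigenvalues_pos i
  have hmle : ∀ i, m ≤ hA.1.eigenvalues i :=
    fun i => ciInf_le (Set.finite_range _).bddBelow i
  have hleM : ∀ i, hA.1.eigenvalues i ≤ M :=
    fun i => le_ciSup (Set.finite_range _).bddAbove i
  have hm0 : 0 < m := by
    obtain ⟨i, hi⟩ := exists_eq_ciInf_of_finite (f := hA.1.eigenvalues)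
    rw [hm, ← hi]; exact heigpos i
  have hM0 : 0 < M := lt_of_lt_of_le (heigpos (Classical.arbitrary n)) (hleM _)
  have hmM : m ≤ M := le_trans (hmle (Classical.arbitrary n)) (hleM _)
  have hMκ : M = κ * m := by rw [hκ]; field_simp
  have hκ1 : 1 ≤ κ := by rw [hκ, le_div_iff₀ hm0]; linarith
  have hκ3 : 1 ≤ κ ^ 3 := one_le_pow₀ hκ1
  have hε56 : ε ≤ 1/56 := by
    refine le_trans hε ?_
    rw [div_le_div_iff₀ (by positivity) (by norm_num)]
    nlinarith
  have hu56 : κ ^ 3 * ε ≤ 1/56 := by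
    have h := mul_le_mul_of_nonneg_left hε (by positivity : (0:ℝ) ≤ κ ^ 3)
    calc κ ^ 3 * ε ≤ κ ^ 3 * (1 / (56 * κ ^ 3)) := h
      _ = 1/56 := by field_simp
  have hu0 : 0 < κ ^ 3 * ε := by positivity
  set t := Real.exp ε - 1 with ht
  have hexpε : Real.exp ε = t + 1 := by rw [ht]; ring
  have ht0 : 0 < t := by
    have := Real.add_one_lt_exp (ne_of_gt hε0); rw [ht]; linarith
  have hee : Real.exp ε * Real.exp (-ε) = 1 := by
    rw [← Real.exp_add]; simp
  have htε : t ≤ 2 * ε := by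
    have h1 : 1 - ε ≤ Real.exp (-ε) := by have := Real.add_one_le_exp (-ε); linarith
    have h3 : Real.exp ε ≤ 2 := by
      calc Real.exp ε ≤ Real.exp (1/56) := Real.exp_le_exp.mpr hε56
        _ ≤ Real.exp (Real.log 2) := by
            apply Real.exp_le_exp.mpr
            have := Real.log_two_gt_d9; linarith
        _ = 2 := Real.exp_log (by norm_num)
    nlinarith [Real.exp_pos ε]
  have ht28 : t ≤ 1/28 := by linarith
  set c := t * M with hc
  have hc0 : 0 < c := mul_pos ht0 hM0
  -- rescaled hypotheses
  have hBA1 : (Real.exp ε • A - B).PosSemidef := by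
    have h := psd_smul' (Real.exp_pos ε).le h2
    rwa [show Real.exp ε • (A - Real.exp (-ε) • B) = Real.exp ε • A - B by
      rw [smul_sub, smul_smul, hee, one_smul]] at h
  have hAB1 : (B - Real.exp (-ε) • A).PosSemidef := by
    have h := psd_smul' (Real.exp_pos (-ε)).le h1
    rwa [show Real.exp (-ε) • (Real.exp ε • B - A) = B - Real.exp (-ε) • A by
      rw [smul_sub, smul_smul, mul_comm, hee, one_smul]] at h
  -- spectral facts for A
  have pA1 : (A ^ 3 - m ^ 3 • (1 : Matrix n n ℂ)).PosSemidef := by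
    have h := psd_poly' hA.1 (-(m^3)) 1 0 3 (fun i => by
      have h1 := pow_le_pow_left₀ hm0.le (hmle i) 3
      simp only [pow_zero, mul_one, one_mul]; linarith)
    rwa [show (-(m^3) : ℝ) • A ^ 0 + (1:ℝ) • A ^ 3 = A ^ 3 - m ^ 3 • 1 by
      rw [pow_zero]; module] at h
  have pA2 : (M • (1 : Matrix n n ℂ) - A).PosSemidef := by
    have h := psd_poly' hA.1 M (-1) 0 1 (fun i => by
      have h1 := hleM i; simp only [pow_zero, pow_one]; linarith)
    rwa [show (M : ℝ) • A ^ 0 + (-1:ℝ) • A ^ 1 = M • 1 - A by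
      rw [pow_zero, pow_one]; module] at h
  have pA3 : (M ^ 2 • (1 : Matrix n n ℂ) - A ^ 2).PosSemidef := by
    have h := psd_poly' hA.1 (M^2) (-1) 0 2 (fun i => by
      have h1 := pow_le_pow_left₀ (heigpos i).le (hleM i) 2
      simp only [pow_zero, mul_one, neg_one_mul]; linarith)
    rwa [show (M^2 : ℝ) • A ^ 0 + (-1:ℝ) • A ^ 2 = M ^ 2 • 1 - A ^ 2 by
      rw [pow_zero]; module] at h
  have pA4 : (M ^ 4 • (1 : Matrix n n ℂ) - A ^ 4).PosSemidef := by
    have h := psd_poly' hA.1 (M^4) (-1) 0 4 (fun i => by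
      have h1 := pow_le_pow_left₀ (heigpos i).le (hleM i) 4
      simp only [pow_zero, mul_one, neg_one_mul]; linarith)
    rwa [show (M^4 : ℝ) • A ^ 0 + (-1:ℝ) • A ^ 4 = M ^ 4 • 1 - A ^ 4 by
      rw [pow_zero]; module] at h
  -- order bounds on E := B - A
  have hcE : (c • (1 : Matrix n n ℂ) - (B - A)).PosSemidef := by
    have h := (psd_smul' ht0.le pA2).add hBA1
    rwa [show t • (M • (1 : Matrix n n ℂ) - A) + (Real.exp ε • A - B)
        = c • 1 - (B - A) by rw [hexpε, hc]; module] at h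
  have hEc : ((B - A) + c • (1 : Matrix n n ℂ)).PosSemidef := by
    have hs : 0 ≤ Real.exp (-ε) + Real.exp ε - 2 := by
      nlinarith [Real.exp_pos ε, hee, sq_nonneg (Real.exp ε - 1)]
    have h := (hAB1.add (psd_smul' hs hA.posSemidef)).add (psd_smul' ht0.le pA2)
    rwa [show (B - Real.exp (-ε) • A + (Real.exp (-ε) + Real.exp ε - 2) • A)
        + t • (M • (1 : Matrix n n ℂ) - A) = (B - A) + c • 1 by
      rw [hexpε, hc]; module] at h
  -- eigenvalue bounds for E
  have hEb : ∀ i, |hE.eigenvalues i| ≤ c := by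
    intro i
    rw [abs_le]
    constructor
    · have h := (psd_cfc_iff' hE (fun x => (1:ℝ) * x ^ 1 + c * x ^ 0)).mp (by
        rw [cfc_poly' (B - A) hE 1 c 1 0,
          show (1:ℝ) • (B - A) ^ 1 + c • (B - A) ^ 0 = (B - A) + c • 1 by
            rw [pow_zero, pow_one]; module]
        exact hEc) i
      simp only [pow_one, pow_zero, one_mul, mul_one] at h
      linarith
    · have h := (psd_cfc_iff' hE (fun x => c * x ^ 0 + (-1:ℝ) * x ^ 1)).mp (by
        rw [cfc_poly' (B - A) hE c (-1) 0 1,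
          show c • (B - A) ^ 0 + (-1:ℝ) • (B - A) ^ 1 = c • 1 - (B - A) by
            rw [pow_zero, pow_one]; module]
        exact hcE) i
      simp only [pow_one, pow_zero, mul_one, neg_one_mul] at h
      linarith
  -- spectral facts for E
  have pE2 : (c ^ 2 • (1 : Matrix n n ℂ) - (B - A) ^ 2).PosSemidef := by
    have h := psd_poly' hE (c^2) (-1) 0 2 (fun i => by
      have h1 := pow_le_pow_left₀ (abs_nonneg (hE.eigenvalues i)) (hEb i) 2
      have h2 : hE.eigenvalues i ^ 2 ≤ |hE.eigenvalues i| ^ 2 := by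
        rw [← abs_pow]; exact le_abs_self _
      simp only [pow_zero, mul_one, neg_one_mul]; linarith)
    rwa [show (c^2 : ℝ) • (B - A) ^ 0 + (-1:ℝ) • (B - A) ^ 2
        = c ^ 2 • 1 - (B - A) ^ 2 by rw [pow_zero]; module] at h
  have pE4 : (c ^ 4 • (1 : Matrix n n ℂ) - (B - A) ^ 4).PosSemidef := by
    have h := psd_poly' hE (c^4) (-1) 0 4 (fun i => by
      have h1 := pow_le_pow_left₀ (abs_nonneg (hE.eigenvalues i)) (hEb i) 4
      have h2 : hE.eigenvalues i ^ 4 ≤ |hE.eigenvalues i| ^ 4 := by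
        rw [← abs_pow]; exact le_abs_self _
      simp only [pow_zero, mul_one, neg_one_mul]; linarith)
    rwa [show (c^4 : ℝ) • (B - A) ^ 0 + (-1:ℝ) • (B - A) ^ 4
        = c ^ 4 • 1 - (B - A) ^ 4 by rw [pow_zero]; module] at h
  have pE3u : (c ^ 3 • (1 : Matrix n n ℂ) - (B - A) ^ 3).PosSemidef := by
    have h := psd_poly' hE (c^3) (-1) 0 3 (fun i => by
      have h1 := pow_le_pow_left₀ (abs_nonneg (hE.eigenvalues i)) (hEb i) 3
      have h2 : hE.eigenvalues i ^ 3 ≤ |hE.eigenvalues i| ^ 3 := by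
        rw [← abs_pow]; exact le_abs_self _
      simp only [pow_zero, mul_one, neg_one_mul]; linarith)
    rwa [show (c^3 : ℝ) • (B - A) ^ 0 + (-1:ℝ) • (B - A) ^ 3
        = c ^ 3 • 1 - (B - A) ^ 3 by rw [pow_zero]; module] at h
  have pE3l : ((B - A) ^ 3 + c ^ 3 • (1 : Matrix n n ℂ)).PosSemidef := by
    have h := psd_poly' hE (c^3) 1 0 3 (fun i => by
      have h1 := pow_le_pow_left₀ (abs_nonneg (hE.eigenvalues i)) (hEb i) 3
      have h2 : -(|hE.eigenvalues i| ^ 3) ≤ hE.eigenvalues i ^ 3 := by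
        rw [← abs_pow]; exact neg_abs_le _
      simp only [pow_zero, mul_one, one_mul]; linarith)
    rwa [show (c^3 : ℝ) • (B - A) ^ 0 + (1:ℝ) • (B - A) ^ 3
        = (B - A) ^ 3 + c ^ 3 • 1 by rw [pow_zero]; module] at h
  -- conjugation facts
  have hAEA_u : (c • A ^ 2 - A * (B - A) * A).PosSemidef := by
    have h := hcE.mul_mul_conjTranspose_same A
    rw [hA.1.eq, conj_sub' A (B - A) c,
      show A * A = A ^ 2 from (pow_two A).symm] at h
    exact h
  have hAEA_l : (A * (B - A) * A + c • A ^ 2).PosSemidef := by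
    have h := hEc.mul_mul_conjTranspose_same A
    rw [hA.1.eq, conj_add' A (B - A) c,
      show A * A = A ^ 2 from (pow_two A).symm] at h
    exact h
  have hEAE_u : (M • (B - A) ^ 2 - (B - A) * A * (B - A)).PosSemidef := by
    have h := pA2.mul_mul_conjTranspose_same (B - A)
    rw [hE.eq, conj_sub' (B - A) A M,
      show (B - A) * (B - A) = (B - A) ^ 2 from (pow_two _).symm] at h
    exact h
  have hEAE_l : ((B - A) * A * (B - A)).PosSemidef := by
    have h := hA.posSemidef.mul_mul_conjTranspose_same (B - A)
    rwa [hE.eq] at h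
  -- square tricks
  have hMne : (M : ℝ) ≠ 0 := ne_of_gt hM0
  have hcne : (c : ℝ) ≠ 0 := ne_of_gt hc0
  have hst1 := sq_trick' (hA.1.pow 2) hE
    (s := c / M ^ 2) (u := M ^ 2 / c) (by positivity) (by field_simp)
  rw [show A ^ 2 * A ^ 2 = A ^ 4 from by rw [← pow_add],
      show (B - A) * (B - A) = (B - A) ^ 2 from (pow_two _).symm] at hst1
  have hst2 := sq_trick' hA.1 (hE.pow 2)
    (s := c ^ 2 / M) (u := M / c ^ 2) (by positivity) (by field_simp)
  rw [show (B - A) ^ 2 * (B - A) ^ 2 = (B - A) ^ 4 from by rw [← pow_add]] at hst2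
  -- main assembly
  set r := 3*c*M^2 + 3*c^2*M + c^3 with hr
  have hr0 : 0 < r := by rw [hr]; positivity
  have hexp3 : B ^ 3 - A ^ 3 = A ^ 2 * (B - A) + (B - A) * A ^ 2 + A * (B - A) * A
      + (A * (B - A) ^ 2 + (B - A) ^ 2 * A) + (B - A) * A * (B - A) + (B - A) ^ 3 := by
    noncomm_ring
  have BigU : (r • (1 : Matrix n n ℂ) - (B ^ 3 - A ^ 3)).PosSemidef := by
    have h := ((((((((((hst1.1.add
      (psd_smul' (by positivity : (0:ℝ) ≤ c / M^2) pA4)).add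
      (psd_smul' (by positivity : (0:ℝ) ≤ M^2 / c) pE2)).add
      hAEA_u).add
      (psd_smul' hc0.le pA3)).add
      hst2.1).add
      (psd_smul' (by positivity : (0:ℝ) ≤ c^2 / M) pA3)).add
      (psd_smul' (by positivity : (0:ℝ) ≤ M / c^2) pE4)).add
      hEAE_u).add
      (psd_smul' hM0.le pE2)).add
      pE3u)
    rw [hexp3]
    rwa [show ((c / M^2) • A ^ 4 + (M^2 / c) • (B - A) ^ 2 - (A ^ 2 * (B - A) + (B - A) * A ^ 2)
        + (c / M^2) • (M ^ 4 • (1 : Matrix n n ℂ) - A ^ 4)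
        + (M^2 / c) • (c ^ 2 • (1 : Matrix n n ℂ) - (B - A) ^ 2)
        + (c • A ^ 2 - A * (B - A) * A)
        + c • (M ^ 2 • (1 : Matrix n n ℂ) - A ^ 2)
        + ((c^2 / M) • (A * A) + (M / c^2) • (B - A) ^ 4 - (A * (B - A) ^ 2 + (B - A) ^ 2 * A))
        + (c^2 / M) • (M ^ 2 • (1 : Matrix n n ℂ) - A ^ 2)
        + (M / c^2) • (c ^ 4 • (1 : Matrix n n ℂ) - (B - A) ^ 4)
        + (M • (B - A) ^ 2 - (B - A) * A * (B - A))
        + M • (c ^ 2 • (1 : Matrix n n ℂ) - (B - A) ^ 2)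
        + (c ^ 3 • (1 : Matrix n n ℂ) - (B - A) ^ 3))
        = r • (1 : Matrix n n ℂ) - (A ^ 2 * (B - A) + (B - A) * A ^ 2 + A * (B - A) * A
          + (A * (B - A) ^ 2 + (B - A) ^ 2 * A) + (B - A) * A * (B - A) + (B - A) ^ 3) by
      rw [hr, show A * A = A ^ 2 from (pow_two A).symm]
      match_scalars <;> field_simp <;> ring] at h
  have BigL : (r • (1 : Matrix n n ℂ) + (B ^ 3 - A ^ 3)).PosSemidef := by
    have h := ((((((((((hst1.2.add
      (psd_smul' (by positivity : (0:ℝ) ≤ c / M^2) pA4)).add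
      (psd_smul' (by positivity : (0:ℝ) ≤ M^2 / c) pE2)).add
      hAEA_l).add
      (psd_smul' hc0.le pA3)).add
      hst2.2).add
      (psd_smul' (by positivity : (0:ℝ) ≤ c^2 / M) pA3)).add
      (psd_smul' (by positivity : (0:ℝ) ≤ M / c^2) pE4)).add
      hEAE_l).add
      (psd_smul' (by positivity : (0:ℝ) ≤ M * c^2) Matrix.PosSemidef.one)).add
      pE3l)
    rw [hexp3]
    rwa [show ((c / M^2) • A ^ 4 + (M^2 / c) • (B - A) ^ 2 + (A ^ 2 * (B - A) + (B - A) * A ^ 2)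
        + (c / M^2) • (M ^ 4 • (1 : Matrix n n ℂ) - A ^ 4)
        + (M^2 / c) • (c ^ 2 • (1 : Matrix n n ℂ) - (B - A) ^ 2)
        + (A * (B - A) * A + c • A ^ 2)
        + c • (M ^ 2 • (1 : Matrix n n ℂ) - A ^ 2)
        + ((c^2 / M) • (A * A) + (M / c^2) • (B - A) ^ 4 + (A * (B - A) ^ 2 + (B - A) ^ 2 * A))
        + (c^2 / M) • (M ^ 2 • (1 : Matrix n n ℂ) - A ^ 2)
        + (M / c^2) • (c ^ 4 • (1 : Matrix n n ℂ) - (B - A) ^ 4)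
        + (B - A) * A * (B - A)
        + (M * c^2) • (1 : Matrix n n ℂ)
        + ((B - A) ^ 3 + c ^ 3 • (1 : Matrix n n ℂ)))
        = r • (1 : Matrix n n ℂ) + (A ^ 2 * (B - A) + (B - A) * A ^ 2 + A * (B - A) * A
          + (A * (B - A) ^ 2 + (B - A) ^ 2 * A) + (B - A) * A * (B - A) + (B - A) ^ 3) by
      rw [hr, show A * A = A ^ 2 from (pow_two A).symm]
      match_scalars <;> field_simp <;> ring] at h
  -- from uniform bound to relative bound
  have hm3 : (0:ℝ) < m ^ 3 := by positivity
  have hρ0 : 0 ≤ r / m ^ 3 := by positivity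
  have hU : ((r / m ^ 3) • A ^ 3 - (B ^ 3 - A ^ 3)).PosSemidef := by
    have h := BigU.add (psd_smul' hρ0 pA1)
    rwa [show r • (1 : Matrix n n ℂ) - (B ^ 3 - A ^ 3)
        + (r / m ^ 3) • (A ^ 3 - m ^ 3 • (1 : Matrix n n ℂ))
        = (r / m ^ 3) • A ^ 3 - (B ^ 3 - A ^ 3) by
      match_scalars <;> field_simp <;> ring] at h
  have hL : ((r / m ^ 3) • A ^ 3 + (B ^ 3 - A ^ 3)).PosSemidef := by
    have h := BigL.add (psd_smul' hρ0 pA1)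
    rwa [show r • (1 : Matrix n n ℂ) + (B ^ 3 - A ^ 3)
        + (r / m ^ 3) • (A ^ 3 - m ^ 3 • (1 : Matrix n n ℂ))
        = (r / m ^ 3) • A ^ 3 + (B ^ 3 - A ^ 3) by
      match_scalars <;> field_simp <;> ring] at h
  -- bound on ρ := r / m³
  have hρ7 : r / m ^ 3 ≤ 7 * (κ ^ 3 * ε) := by
    rw [div_le_iff₀ hm3]
    have haux : 3*t + 3*t^2 + t^3 ≤ 7*ε := by nlinarith
    have hfac : r = (3*t + 3*t^2 + t^3) * (κ^3 * m^3) := by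
      rw [hr, hc, hMκ]; ring
    rw [hfac]
    nlinarith [mul_le_mul_of_nonneg_right haux (by positivity : (0:ℝ) ≤ κ^3 * m^3)]
  have hδexp : 1 + 56 * (κ^3 * ε) ≤ Real.exp (56 * κ ^ 3 * ε) := by
    have := Real.add_one_le_exp (56 * κ ^ 3 * ε); linarith
  have hA3 : (A ^ 3).PosSemidef := hA.posSemidef.pow 3
  constructor
  · -- upper bound
    have hK1 : (0:ℝ) ≤ Real.exp (56 * κ ^ 3 * ε) * (1 - r / m ^ 3) - 1 := by
      have := key_ineq1' hu0 hu56 hρ0 hρ7 hδexp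
      linarith
    have h := (psd_smul' (Real.exp_pos (56 * κ ^ 3 * ε)).le hL).add (psd_smul' hK1 hA3)
    rwa [show Real.exp (56 * κ ^ 3 * ε) • ((r / m ^ 3) • A ^ 3 + (B ^ 3 - A ^ 3))
        + (Real.exp (56 * κ ^ 3 * ε) * (1 - r / m ^ 3) - 1) • A ^ 3
        = Real.exp (56 * κ ^ 3 * ε) • B ^ 3 - A ^ 3 by
      match_scalars <;> ring] at h
  · -- lower bound
    have hK2 : (0:ℝ) ≤ 1 - Real.exp (-(56 * κ ^ 3 * ε)) * (1 + r / m ^ 3) := by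
      rw [Real.exp_neg, sub_nonneg, ← div_eq_inv_mul,
        div_le_one (Real.exp_pos _)]
      linarith
    have h := (psd_smul' (Real.exp_pos (-(56 * κ ^ 3 * ε))).le hU).add (psd_smul' hK2 hA3)
    rwa [show Real.exp (-(56 * κ ^ 3 * ε)) • ((r / m ^ 3) • A ^ 3 - (B ^ 3 - A ^ 3))
        + (1 - Real.exp (-(56 * κ ^ 3 * ε)) * (1 + r / m ^ 3)) • A ^ 3
        = A ^ 3 - Real.exp (-(56 * κ ^ 3 * ε)) • B ^ 3 by
      match_scalars <;> ring] at h
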